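/- Let V be a finite-dimensional real vector space, W ⊆ V a subspace, and ξ a bivector (a grade-2 element of the exterior algebra ⋀V). Then ξ lies in ⋀²W if and only if for every pair of linear functionals f, g : V →ₗ[ℝ] ℝ with f vanishing on W, the evaluation of ξ against f∧g is zero; here the evaluation against f∧g is the unique linear functional on the grade-2 component of ⋀V sending ι(x)*ι(y) to f(x)·g(y) − f(y)·g(x). -/

import Mathlib

open ExteriorAlgebra

noncomputable section

variable {V : Type*} [AddCommGroup V] [Module ℝ V]

/-- The wedge `x ∧ y` of two vectors, as an element of the second exterior power
`⋀²V` (the grade-2 component of the exterior algebra). -/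
def sardWedge (x y : V) : ⋀[ℝ]^2 V :=
  ⟨ι ℝ x * ι ℝ y, by
    show ι ℝ x * ι ℝ y ∈ LinearMap.range (ι ℝ : V →ₗ[ℝ] ExteriorAlgebra ℝ V) ^ 2
    rw [pow_two]
    exact Submodule.mul_mem_mul (LinearMap.mem_range_self _ x) (LinearMap.mem_range_self _ y)⟩

def sardAlt (f g : V →ₗ[ℝ] ℝ) : V [⋀^Fin 2]→ₗ[ℝ] ℝ where
  toMultilinearMap :=
    (MultilinearMap.mkPiAlgebra ℝ (Fin 2) ℝ).compLinearMap ![f, g] -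
      (MultilinearMap.mkPiAlgebra ℝ (Fin 2) ℝ).compLinearMap ![g, f]
  map_eq_zero_of_eq' := by
    intro v i j h hij
    have hv : v 0 = v 1 := by fin_cases i <;> fin_cases j <;> simp_all
    simp [MultilinearMap.mkPiAlgebra_apply, Fin.prod_univ_two, hv, mul_comm]

theorem sardAlt_apply (f g : V →ₗ[ℝ] ℝ) (x y : V) :
    sardAlt f g ![x, y] = f x * g y - f y * g x := by
  simp [sardAlt, MultilinearMap.mkPiAlgebra_apply, Fin.prod_univ_two, mul_comm]

def sardFam (f g : V →ₗ[ℝ] ℝ) : ∀ n : ℕ, V [⋀^Fin n]→ₗ[ℝ] ℝ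
  | 2 => sardAlt f g
  | _ => 0

def sardPhi (f g : V →ₗ[ℝ] ℝ) : ExteriorAlgebra ℝ V →ₗ[ℝ] ℝ :=
  liftAlternating (sardFam f g)

theorem sardPhi_wedge (f g : V →ₗ[ℝ] ℝ) (x y : V) :
    sardPhi f g (ι ℝ x * ι ℝ y) = f x * g y - f y * g x := by
  have h : ι ℝ x * ι ℝ y = ιMulti ℝ 2 ![x, y] := by simp [ιMulti_apply]
  rw [sardPhi, h, liftAlternating_apply_ιMulti]
  exact sardAlt_apply f g x y

theorem sard_span2 {I : Type*} (b : Module.Basis I ℝ V) :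
    (⋀[ℝ]^2 V : Submodule ℝ (ExteriorAlgebra ℝ V)) =
      Submodule.span ℝ (Set.range fun p : I × I => ι ℝ (b p.1) * ι ℝ (b p.2)) := by
  have h1 : LinearMap.range (ι ℝ : V →ₗ[ℝ] ExteriorAlgebra ℝ V) =
      Submodule.span ℝ (Set.range fun i => ι ℝ (b i)) := by
    rw [LinearMap.range_eq_map, ← b.span_eq, Submodule.map_span, ← Set.range_comp]
    rfl
  show LinearMap.range (ι ℝ : V →ₗ[ℝ] ExteriorAlgebra ℝ V) ^ 2 = _
  rw [pow_two, h1, Submodule.span_mul_span]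
  congr 1
  ext z
  constructor
  · rintro ⟨x, ⟨i, rfl⟩, y, ⟨j, rfl⟩, rfl⟩
    exact ⟨(i, j), rfl⟩
  · rintro ⟨⟨i, j⟩, rfl⟩
    exact ⟨_, ⟨i, rfl⟩, _, ⟨j, rfl⟩, rfl⟩

/-- A bivector `ξ` lies in `⋀²W` (the submodule spanned by products `ι w₁ * ι w₂` with
`w₁, w₂ ∈ W`) if and only if for all linear functionals `f, g` on `V` with `f` vanishing on
`W`, the evaluation of `ξ` against `f ∧ g` — i.e. the unique linear functional on the grade-2
component sending `ι x * ι y` to `f(x)·g(y) − f(y)·g(x)` — vanishes on `ξ`. -/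
theorem sard_bivector_support (V : Type*) [AddCommGroup V] [Module ℝ V]
    [FiniteDimensional ℝ V] (W : Submodule ℝ V)
    (ξ : ExteriorAlgebra ℝ V) (hξ : ξ ∈ ⋀[ℝ]^2 V) :
    ξ ∈ Submodule.span ℝ
        {z : ExteriorAlgebra ℝ V | ∃ w₁ ∈ W, ∃ w₂ ∈ W, z = ι ℝ w₁ * ι ℝ w₂} ↔
      ∀ f g : V →ₗ[ℝ] ℝ, (∀ w ∈ W, f w = 0) →
        ∀ φ : ↥(⋀[ℝ]^2 V) →ₗ[ℝ] ℝ,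
          (∀ x y : V, φ (sardWedge x y) = f x * g y - f y * g x) →
          φ ⟨ξ, hξ⟩ = 0 := by
  constructor
  · intro hmem f g hf φ hφ
    have hle : Submodule.span ℝ
        {z : ExteriorAlgebra ℝ V | ∃ w₁ ∈ W, ∃ w₂ ∈ W, z = ι ℝ w₁ * ι ℝ w₂} ≤
        Submodule.map (⋀[ℝ]^2 V).subtype (LinearMap.ker φ) := by
      rw [Submodule.span_le]
      rintro z ⟨w₁, hw₁, w₂, hw₂, rfl⟩
      refine ⟨sardWedge w₁ w₂, ?_, rfl⟩
      simp only [SetLike.mem_coe, LinearMap.mem_ker, hφ, hf w₁ hw₁, hf w₂ hw₂]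
      ring
    obtain ⟨a, ha, hav⟩ := hle hmem
    have : a = ⟨ξ, hξ⟩ := Subtype.ext hav
    rw [← this]
    exact ha
  · intro H
    -- adapted basis
    obtain ⟨W', hc⟩ := Submodule.exists_isCompl W
    have : FiniteDimensional ℝ W := inferInstance
    let bW := Module.finBasis ℝ W
    let bW' := Module.finBasis ℝ W'
    let e := Submodule.prodEquivOfIsCompl W W' hc
    let b := (bW.prod bW').map e
    have hbl : ∀ i, b (Sum.inl i) ∈ W := by
      intro i
      have : b (Sum.inl i) = (bW i : V) := by
        simp [b, e, Module.Basis.prod_apply, Submodule.coe_prodEquivOfIsCompl']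
      rw [this]; exact (bW i).2
    have hcoord : ∀ i, ∀ w ∈ W, b.coord (Sum.inr i) w = 0 := by
      intro i w hw
      have hsymm : e.symm w = (⟨w, hw⟩, 0) :=
        Submodule.prodEquivOfIsCompl_symm_apply_left (p := W) (q := W') hc ⟨w, hw⟩
      simp [b, Module.Basis.coord_apply, Module.Basis.map_repr, hsymm, Module.Basis.prod_repr_inr]
    -- expand ξ in the basis of wedges
    have hξ' := hξ
    rw [sard_span2 b, Submodule.mem_span_range_iff_exists_fun] at hξ'
    obtain ⟨c, hcξ⟩ := hξ'
    -- key coefficient identity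
    have hkey : ∀ r s, (∀ w ∈ W, b.coord r w = 0) → c (r, s) = c (s, r) := by
      intro r s hr
      have h0 := H (b.coord r) (b.coord s) hr
        ((sardPhi (b.coord r) (b.coord s)).comp (⋀[ℝ]^2 V).subtype)
        (fun x y => by
          simp only [LinearMap.comp_apply, Submodule.coe_subtype, sardWedge]
          exact sardPhi_wedge _ _ x y)
      have h1 : sardPhi (b.coord r) (b.coord s) ξ = c (r, s) - c (s, r) := by
        rw [← hcξ, map_sum]
        have hterm : ∀ p, sardPhi (b.coord r) (b.coord s) (c p • (ι ℝ (b p.1) * ι ℝ (b p.2))) =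
            c p * ((if p.1 = r then (1:ℝ) else 0) * (if p.2 = s then 1 else 0) -
              (if p.2 = r then 1 else 0) * (if p.1 = s then 1 else 0)) := by
          intro p
          rw [map_smul, sardPhi_wedge, smul_eq_mul]
          simp [Module.Basis.coord_apply, Module.Basis.repr_self, Finsupp.single_apply]
        simp_rw [hterm]
        rw [Fintype.sum_prod_type]
        simp [mul_sub, Finset.sum_sub_distrib, mul_ite, ite_mul, Finset.sum_ite_eq',
          Finset.sum_ite_eq]
      simp only [LinearMap.comp_apply, Submodule.coe_subtype] at h0
      rw [h1] at h0
      linarith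
    -- antisymmetry of wedges
    have hswap : ∀ x y : V, ι ℝ y * ι ℝ x = -(ι ℝ x * ι ℝ y) :=
      fun x y => eq_neg_of_add_eq_zero_right (ι_add_mul_swap x y)
    have hsum2 : ∑ p : _ × _, c (p.2, p.1) • (ι ℝ (b p.1) * ι ℝ (b p.2)) = -ξ := by
      rw [Fintype.sum_equiv (Equiv.prodComm _ _)
        (fun p => c (p.2, p.1) • (ι ℝ (b p.1) * ι ℝ (b p.2)))
        (fun q => c q • (-(ι ℝ (b q.1) * ι ℝ (b q.2))))
        (fun p => by dsimp only [Equiv.prodComm_apply, Prod.swap]; rw [hswap (b p.2) (b p.1)])]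
      simp only [smul_neg]
      rw [Finset.sum_neg_distrib, hcξ]
    have hrep2 : ξ = ∑ p : _ × _, ((c p - c (p.2, p.1)) / 2) • (ι ℝ (b p.1) * ι ℝ (b p.2)) := by
      have hterm : ∀ p : _ × _, ((c p - c (p.2, p.1)) / 2) • (ι ℝ (b p.1) * ι ℝ (b p.2)) =
          ((1:ℝ)/2) • (c p • (ι ℝ (b p.1) * ι ℝ (b p.2))) -
          ((1:ℝ)/2) • (c (p.2, p.1) • (ι ℝ (b p.1) * ι ℝ (b p.2))) := by
        intro p
        rw [smul_smul, smul_smul, ← sub_smul]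
        ring_nf
      rw [eq_comm]
      calc ∑ p, ((c p - c (p.2, p.1)) / 2) • (ι ℝ (b p.1) * ι ℝ (b p.2))
          = ∑ p, (((1:ℝ)/2) • (c p • (ι ℝ (b p.1) * ι ℝ (b p.2))) -
              ((1:ℝ)/2) • (c (p.2, p.1) • (ι ℝ (b p.1) * ι ℝ (b p.2)))) := by
            simp_rw [hterm]
        _ = ((1:ℝ)/2) • ξ - ((1:ℝ)/2) • (-ξ) := by
            rw [Finset.sum_sub_distrib, ← Finset.smul_sum, ← Finset.smul_sum, hcξ, hsum2]
        _ = ξ := by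
            rw [smul_neg, sub_neg_eq_add, ← add_smul]
            norm_num
    rw [hrep2]
    refine Submodule.sum_mem _ fun p _ => ?_
    obtain ⟨p1, p2⟩ := p
    match p1, p2 with
    | Sum.inl i, Sum.inl j =>
      exact Submodule.smul_mem _ _ (Submodule.subset_span
        ⟨b (Sum.inl i), hbl i, b (Sum.inl j), hbl j, rfl⟩)
    | Sum.inl i, Sum.inr j =>
      have h := hkey (Sum.inr j) (Sum.inl i) (hcoord j)
      have : (c (Sum.inl i, Sum.inr j) - c (Sum.inr j, Sum.inl i)) / 2 = 0 := by
        rw [← h]; ring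
      rw [this, zero_smul]
      exact Submodule.zero_mem _
    | Sum.inr i, p2 =>
      have h := hkey (Sum.inr i) p2 (hcoord i)
      have : (c (Sum.inr i, p2) - c (p2, Sum.inr i)) / 2 = 0 := by
        rw [h]; ring
      rw [this, zero_smul]
      exact Submodule.zero_mem _

end
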